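/- Let U and Y be complex Hilbert spaces, F a closed subspace of U, and ω = (ω₁, ω₂) : F → Y ⊕ U a contraction. Suppose that either ω₁ is a strict contraction (‖ω₁‖ < 1) or U is finite-dimensional. Then the operator ω₁ (Π_F ω₂)ⁿ : F → Y is a co-isometry for every integer n ≥ 0 if and only if Y = {0}. -/

import Mathlib

open ContinuousLinearMap
open scoped ComplexInnerProductSpace

set_option maxHeartbeats 1600000 in
/-- if `ω₁` is a strict contraction or `U` is finite dimensional, then
`ω₁ (Π_F ω₂)ⁿ` is a co-isometry for every `n ≥ 0` iff `Y = {0}`. -/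
theorem stmt_10
    {U Y : Type*}
    [NormedAddCommGroup U] [InnerProductSpace ℂ U] [CompleteSpace U]
    [NormedAddCommGroup Y] [InnerProductSpace ℂ Y] [CompleteSpace Y]
    (F : Submodule ℂ U) [CompleteSpace F]
    (ω₁ : F →L[ℂ] Y) (ω₂ : F →L[ℂ] U)
    (hcontr : ∀ f : F, ‖ω₁ f‖ ^ 2 + ‖ω₂ f‖ ^ 2 ≤ ‖f‖ ^ 2)
    (hyp : ‖ω₁‖ < 1 ∨ FiniteDimensional ℂ U) :
    (∀ n : ℕ,
        (ω₁.comp (((F.orthogonalProjection).comp ω₂) ^ n)).comp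
          (ω₁.comp (((F.orthogonalProjection).comp ω₂) ^ n)).adjoint = 1) ↔
      (∀ y : Y, y = 0) := by
  classical
  set A : F →L[ℂ] F := (F.orthogonalProjection).comp ω₂ with hAdef
  constructor
  · intro hco
    intro y
    by_contra hy
    set y' : Y := ((‖y‖ : ℂ))⁻¹ • y with hy'def
    have hy'norm : ‖y'‖ = 1 := by
      rw [hy'def, norm_smul, norm_inv, Complex.norm_real, Real.norm_eq_abs,
        abs_of_nonneg (norm_nonneg y), inv_mul_cancel₀ (norm_ne_zero_iff.mpr hy)]
    -- co-isometry applied pointwise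
    have hco' : ∀ n (z : Y),
        (ω₁.comp (A ^ n)) ((ω₁.comp (A ^ n)).adjoint z) = z := by
      intro n z
      have := ContinuousLinearMap.ext_iff.mp (hco n) z
      simpa using this
    -- the adjoint is an isometry (up to squares)
    have hiso : ∀ n (z : Y), ‖(ω₁.comp (A ^ n)).adjoint z‖ ^ 2 = ‖z‖ ^ 2 := by
      intro n z
      have h1 : ⟪(ω₁.comp (A ^ n)).adjoint z, (ω₁.comp (A ^ n)).adjoint z⟫
          = ⟪z, z⟫ := by
        rw [ContinuousLinearMap.adjoint_inner_left, hco']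
      rw [inner_self_eq_norm_sq_to_K, inner_self_eq_norm_sq_to_K] at h1
      exact_mod_cast h1
    -- basic single-step estimate
    have hstep : ∀ g : F, ‖A g‖ ^ 2 + ‖ω₁ g‖ ^ 2 ≤ ‖g‖ ^ 2 := by
      intro g
      have h1 : ‖A g‖ ≤ ‖ω₂ g‖ := by
        have h2 : ‖F.orthogonalProjection (ω₂ g)‖ ≤ 1 * ‖ω₂ g‖ :=
          le_trans ((F.orthogonalProjection).le_opNorm _)
            (mul_le_mul_of_nonneg_right (Submodule.orthogonalProjectionOnto_norm_le F) (norm_nonneg _))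
      -- A g = orthogonalProjection F (ω₂ g)
        simpa [hAdef] using h2
      nlinarith [hcontr g, norm_nonneg (ω₂ g), norm_nonneg (A g)]
    -- accumulated estimate along the chain
    have hchain : ∀ (f : F) (k : ℕ),
        ‖(A ^ k) f‖ ^ 2 + ∑ j ∈ Finset.range k, ‖ω₁ ((A ^ j) f)‖ ^ 2 ≤ ‖f‖ ^ 2 := by
      intro f k
      induction k with
      | zero => simp
      | succ k ih =>
        rw [Finset.sum_range_succ]
        have h1 := hstep ((A ^ k) f)
        have h2 : (A ^ (k + 1)) f = A ((A ^ k) f) := by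
          rw [pow_succ']
          rfl
        rw [h2]
        linarith
    have hT : ∀ n, ω₁ ((A ^ n) ((ω₁.comp (A ^ n)).adjoint y')) = y' := by
      intro n
      have := hco' n y'
      simpa using this
    -- key vanishing lemma
    have hkey : ∀ n k, k < n →
        ω₁ ((A ^ k) ((ω₁.comp (A ^ n)).adjoint y')) = 0 := by
      intro n k hk
      set f : F := (ω₁.comp (A ^ n)).adjoint y' with hfdef
      have hf2 : ‖f‖ ^ 2 = 1 := by rw [hiso n y', hy'norm]; norm_num
      have hbn : ‖ω₁ ((A ^ n) f)‖ ^ 2 = 1 := by rw [hT n, hy'norm]; norm_num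
      have han : (1 : ℝ) ≤ ‖(A ^ n) f‖ ^ 2 := by
        have := hstep ((A ^ n) f)
        nlinarith [norm_nonneg (A ((A ^ n) f))]
      have hch := hchain f n
      have hnn : ∀ j ∈ Finset.range n, (0 : ℝ) ≤ ‖ω₁ ((A ^ j) f)‖ ^ 2 :=
        fun j _ => sq_nonneg _
      have hsum0 : ∑ j ∈ Finset.range n, ‖ω₁ ((A ^ j) f)‖ ^ 2 = 0 :=
        le_antisymm (by linarith) (Finset.sum_nonneg hnn)
      have hk0 := (Finset.sum_eq_zero_iff_of_nonneg hnn).mp hsum0 k (Finset.mem_range.mpr hk)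
      have := pow_eq_zero_iff (two_ne_zero) |>.mp hk0
      exact norm_eq_zero.mp this
    rcases hyp with hlt | hfd
    · -- strict contraction case, use n = 0
      set f : F := (ω₁.comp (A ^ 0)).adjoint y' with hfdef
      have hf2 : ‖f‖ ^ 2 = 1 := by rw [hiso 0 y', hy'norm]; norm_num
      have h1 : ω₁ ((A ^ 0) f) = y' := hT 0
      have h2 : ‖ω₁ ((A ^ 0) f)‖ = 1 := by rw [h1, hy'norm]
      have h3 : ‖ω₁ ((A ^ 0) f)‖ ≤ ‖ω₁‖ * ‖(A ^ 0) f‖ := ω₁.le_opNorm _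
      have h4 : (A ^ 0) f = f := by rw [pow_zero]; rfl
      rw [h4] at h2 h3
      nlinarith [norm_nonneg f, norm_nonneg ω₁, ω₁.opNorm_nonneg]
    · -- finite dimensional case: orthcnormal family too large
      haveI : FiniteDimensional ℂ F := FiniteDimensional.finiteDimensional_submodule F
      set d := Module.finrank ℂ F with hd
      set e : Fin (d + 1) → F := fun i => (ω₁.comp (A ^ (i : ℕ))).adjoint y' with hedef
      have horth : ∀ m n : ℕ, m < n →
          ⟪(ω₁.comp (A ^ m)).adjoint y', (ω₁.comp (A ^ n)).adjoint y'⟫ = 0 := by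
        intro m n hmn
        rw [ContinuousLinearMap.adjoint_inner_left]
        have h0 : (ω₁.comp (A ^ m)) ((ω₁.comp (A ^ n)).adjoint y') = 0 := by
          have := hkey n m hmn
          simpa using this
        rw [h0, inner_zero_right]
      have honb : Orthonormal ℂ e := by
        rw [orthonormal_iff_ite]
        intro i j
        by_cases hij : i = j
        · subst hij
          rw [if_pos rfl, inner_self_eq_norm_sq_to_K]
          have : ‖e i‖ ^ 2 = 1 := by
            rw [hedef]
            rw [hiso (i : ℕ) y', hy'norm]; norm_num
          rw [← RCLike.ofReal_pow, this, RCLike.ofReal_one]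
        · simp only [if_neg hij]
          rcases lt_or_gt_of_ne (fun h => hij (Fin.ext h)) with h | h
          · exact horth _ _ h
          · rw [← inner_conj_symm]
            rw [horth _ _ h, map_zero]
      have hli : LinearIndependent ℂ e := honb.linearIndependent
      have hcard := hli.fintype_card_le_finrank
      rw [Fintype.card_fin] at hcard
      omega
  · intro h0 n
    ext z
    exact (h0 _).trans (h0 _).symm
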